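/- arXiv:2210.05660 — 2 statements merged into one kernel-verified Lean document; each statement's English description precedes it below -/
import Mathlib

section
/- In a K-armed bandit in which the rewards of each arm k are iid with finite mean μ_k (arbitrary distribution), using UCB designed for Gaussian rewards with variance σ² > 0, for each sub-optimal arm k, N_k(T)/log(T) → 2σ²/Δ_k² almost surely as T → ∞, and consequently the regret satisfies R(T)/log(T) → ∑_{k ≠ k*} 2σ²/Δ_k almost surely. -/
open MeasureTheory ProbabilityTheory Filter Finset Real Topology

set_option linter.unusedSectionVars false
set_option linter.unusedVariables false
set_option maxHeartbeats 1000000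

namespace UCBAux

section Det
variable {K : ℕ} (a : ℕ → Fin K)

def cnt (k : Fin K) (t : ℕ) : ℕ := ((Finset.Icc 1 t).filter (fun i => a i = k)).card

lemma cnt_le (k : Fin K) (t : ℕ) : cnt a k t ≤ t := by
  have h := Finset.card_filter_le (Finset.Icc 1 t) (fun i => a i = k)
  simpa [cnt] using h

lemma cnt_succ (k : Fin K) (t : ℕ) :
    cnt a k (t+1) = cnt a k t + if a (t+1) = k then 1 else 0 := by
  unfold cnt
  have h : Finset.Icc 1 (t+1) = insert (t+1) (Finset.Icc 1 t) := by
    rw [← Finset.insert_Icc_right_eq_Icc_add_one (by omega)]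
  rw [h, Finset.filter_insert]
  split_ifs with h1
  · rw [Finset.card_insert_of_notMem (by simp)]
  · simp

lemma cnt_mono (k : Fin K) : Monotone (cnt a k) := by
  apply monotone_nat_of_le_succ
  intro t
  rw [cnt_succ]
  split_ifs <;> omega

lemma sum_cnt (t : ℕ) : ∑ k, cnt a k t = t := by
  unfold cnt
  rw [← Finset.card_eq_sum_card_fiberwise (fun i _ => Finset.mem_univ (a i))]
  simp

lemma lastPlay (k : Fin K) (t : ℕ) (h : 1 ≤ cnt a k t) :
    ∃ s, 1 ≤ s ∧ s ≤ t ∧ a s = k ∧ cnt a k t = cnt a k (s-1) + 1 := by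
  classical
  set F := (Finset.Icc 1 t).filter (fun i => a i = k) with hF
  have hne : F.Nonempty := Finset.card_pos.mp h
  set s := F.max' hne with hs
  have hsF : s ∈ F := Finset.max'_mem _ _
  have hs1 : 1 ≤ s := (Finset.mem_Icc.mp (Finset.mem_filter.mp hsF).1).1
  have hst : s ≤ t := (Finset.mem_Icc.mp (Finset.mem_filter.mp hsF).1).2
  have hak : a s = k := (Finset.mem_filter.mp hsF).2
  refine ⟨s, hs1, hst, hak, ?_⟩
  have hFs : F = (Finset.Icc 1 s).filter (fun i => a i = k) := by
    apply Finset.Subset.antisymm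
    · intro i hi
      have hle := Finset.le_max' F i hi
      rw [hF] at hi
      simp only [Finset.mem_filter, Finset.mem_Icc] at hi ⊢
      exact ⟨⟨hi.1.1, hle⟩, hi.2⟩
    · intro i hi
      simp only [Finset.mem_filter, Finset.mem_Icc] at hi
      exact Finset.mem_filter.mpr ⟨Finset.mem_Icc.mpr ⟨hi.1.1, hi.1.2.trans hst⟩, hi.2⟩
  have hs' : s = (s-1) + 1 := by omega
  have : cnt a k s = cnt a k (s-1) + 1 := by
    rw [hs', cnt_succ, ← hs']
    simp [hak]
  calc cnt a k t = F.card := rfl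
    _ = cnt a k s := by rw [hFs]; rfl
    _ = cnt a k (s-1) + 1 := this

lemma exists_play (k : Fin K) (hub : ∀ c : ℕ, ∃ t, c ≤ cnt a k t) (c : ℕ) :
    ∃ s, 1 ≤ s ∧ a s = k ∧ c ≤ cnt a k (s-1) ∧ c ≤ s - 1 := by
  obtain ⟨t, ht⟩ := hub (c+1)
  obtain ⟨s, hs1, _, hak, heq⟩ := lastPlay a k t (by omega)
  refine ⟨s, hs1, hak, by omega, ?_⟩
  have := cnt_le a k (s-1)
  omega

section Main
variable {σ : ℝ} (hσ : 0 < σ) {μ : Fin K → ℝ} {m : Fin K → ℕ → ℝ}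
  (hm : ∀ k, Tendsto (fun n => m k n) atTop (𝓝 (μ k)))
  (hinit : ∀ k, cnt a k K = 1)
  (ha : ∀ t, K ≤ t → ∀ k,
    m k (cnt a k t) + σ * Real.sqrt (2 * Real.log ((t : ℝ) + 1) / (cnt a k t : ℝ))
      ≤ m (a (t+1)) (cnt a (a (t+1)) t)
          + σ * Real.sqrt (2 * Real.log ((t : ℝ) + 1) / (cnt a (a (t+1)) t : ℝ)))

include hσ hm hinit ha

lemma cnt_one (k : Fin K) (t : ℕ) (ht : K ≤ t) : 1 ≤ cnt a k t := by
  have := hinit k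
  have := cnt_mono a k ht
  omega

lemma cnt_atTop (k : Fin K) : Tendsto (fun t => cnt a k t) atTop atTop := by
  apply tendsto_atTop_atTop_of_monotone (cnt_mono a k)
  by_contra hbd
  push_neg at hbd
  obtain ⟨c0, hc0⟩ := hbd
  -- bound on the m's
  have hB : ∀ k : Fin K, ∃ Bk : ℝ, ∀ n, |m k n| ≤ Bk := by
    intro k
    have h1 : Tendsto (fun n => |m k n|) atTop (𝓝 |μ k|) := (hm k).abs
    have h2 : BddAbove (Set.range fun n => |m k n|) := h1.bddAbove_range
    obtain ⟨Bk, hBk⟩ := h2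
    exact ⟨Bk, fun n => hBk (Set.mem_range_self n)⟩
  choose Bf hBf using hB
  set B : ℝ := ∑ k, |Bf k| with hBdef
  have hBb : ∀ k n, |m k n| ≤ B := by
    intro k n
    calc |m k n| ≤ Bf k := hBf k n
      _ ≤ |Bf k| := le_abs_self _
      _ ≤ B := Finset.single_le_sum (f := fun k => |Bf k|) (fun i _ => abs_nonneg _)
          (Finset.mem_univ k)
  have hB0 : 0 ≤ B := le_trans (abs_nonneg _) (hBb k 0)
  -- some arm has unbounded count
  have hub : ∃ j : Fin K, ∀ c : ℕ, ∃ t, c ≤ cnt a j t := by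
    by_contra h
    push_neg at h
    choose cf hcf using h
    set k0 := (∑ j, cf j) + 1 with hk0
    have h1 : ∑ j, cnt a j k0 = k0 := sum_cnt a k0
    have h2 : ∑ j, cnt a j k0 ≤ ∑ j, cf j :=
      Finset.sum_le_sum (fun j _ => (hcf j k0).le)
    omega
  obtain ⟨j, hj⟩ := hub
  -- constants
  have hc02 : 2 ≤ c0 := by
    have := hc0 K
    have := hinit k
    omega
  have hsq2 : (0:ℝ) < Real.sqrt 2 - 1 := by
    have : (1:ℝ) < Real.sqrt 2 := by
      rw [show (1:ℝ) = Real.sqrt 1 by simp]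
      exact Real.sqrt_lt_sqrt (by norm_num) (by norm_num)
    linarith
  set L0 : ℝ := ((2*B+1)/(σ*(Real.sqrt 2 - 1)))^2 * c0 with hL0def
  have hL0 : 0 ≤ L0 := by positivity
  obtain ⟨M, hM⟩ := exists_nat_ge (max (max (K:ℝ) (2*c0)) (Real.exp L0))
  have hMK : K ≤ M := by
    have := le_trans (le_max_left _ _) (le_trans (le_max_left _ _) hM)
    exact_mod_cast this
  have hM2c : (2*c0 : ℝ) ≤ M := le_trans (le_max_right _ _) (le_trans (le_max_left _ _) hM)
  have hMexp : Real.exp L0 ≤ M := le_trans (le_max_right _ _) hM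
  obtain ⟨s, hs1, has, hcs, hsM⟩ := exists_play a j hj M
  set t := s - 1 with htdef
  have hts : t + 1 = s := by omega
  have htK : K ≤ t := by omega
  have key := ha t htK k
  rw [show a (t+1) = j by rw [hts]; exact has] at key
  -- numeric setup
  set L : ℝ := Real.log ((t:ℝ)+1) with hLdef
  have hcastts : ((t:ℝ)+1) = (s:ℝ) := by exact_mod_cast hts
  have hLge : L0 ≤ L := by
    rw [hLdef, hcastts]
    calc L0 = Real.log (Real.exp L0) := (Real.log_exp L0).symm
      _ ≤ Real.log s := by
          have hMs : M ≤ s := by omega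
          exact Real.log_le_log (Real.exp_pos _) (le_trans hMexp (by exact_mod_cast hMs))
  have hL : 0 ≤ L := le_trans hL0 hLge
  set n0 : ℕ := cnt a k t with hn0
  set nj : ℕ := cnt a j t with hnj
  have hn01 : 1 ≤ n0 := cnt_one a hσ hm hinit ha k t htK
  have hn0c : n0 < c0 := hc0 t
  have hnj2c : 2*c0 ≤ nj := by
    have : (2*c0:ℝ) ≤ (M:ℝ) := hM2c
    have hMnj : M ≤ nj := hcs
    exact_mod_cast le_trans (by exact_mod_cast this) (by exact_mod_cast hMnj)
  have hc0R : (0:ℝ) < c0 := by positivity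
  -- bound LHS below
  have hlhs : -B + σ * Real.sqrt (2*L/c0) ≤ m k n0 + σ * Real.sqrt (2*L/(n0:ℝ)) := by
    have h1 : -B ≤ m k n0 := neg_le_of_abs_le (hBb k n0)
    have h2 : Real.sqrt (2*L/c0) ≤ Real.sqrt (2*L/(n0:ℝ)) := by
      apply Real.sqrt_le_sqrt
      gcongr
    nlinarith [mul_le_mul_of_nonneg_left h2 hσ.le]
  -- bound RHS above
  have hrhs : m j nj + σ * Real.sqrt (2*L/(nj:ℝ)) ≤ B + σ * Real.sqrt (L/c0) := by
    have h1 : m j nj ≤ B := le_of_abs_le (hBb j nj)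
    have h2 : Real.sqrt (2*L/(nj:ℝ)) ≤ Real.sqrt (L/c0) := by
      apply Real.sqrt_le_sqrt
      rw [div_le_div_iff₀ (by exact_mod_cast Nat.lt_of_lt_of_le (by omega) hnj2c) hc0R]
      have : (2*c0:ℝ) ≤ (nj:ℝ) := by exact_mod_cast hnj2c
      nlinarith
    nlinarith [mul_le_mul_of_nonneg_left h2 hσ.le]
  have hchain : -B + σ * Real.sqrt (2*L/c0) ≤ B + σ * Real.sqrt (L/c0) := by
    calc -B + σ * Real.sqrt (2*L/c0) ≤ m k n0 + σ * Real.sqrt (2*L/(n0:ℝ)) := hlhs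
      _ ≤ m j nj + σ * Real.sqrt (2*L/(nj:ℝ)) := key
      _ ≤ B + σ * Real.sqrt (L/c0) := hrhs
  -- derive contradiction
  have hsplit : Real.sqrt (2*L/c0) = Real.sqrt 2 * Real.sqrt (L/c0) := by
    rw [← Real.sqrt_mul (by norm_num)]
    ring_nf
  have hfinal : σ * (Real.sqrt 2 - 1) * Real.sqrt (L/c0) ≤ 2*B := by
    rw [hsplit] at hchain
    nlinarith
  have hpos : 0 < σ*(Real.sqrt 2 - 1) := mul_pos hσ hsq2
  have hsqL0 : (2*B+1)/(σ*(Real.sqrt 2 - 1)) ≤ Real.sqrt (L/c0) := by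
    have h1 : Real.sqrt (L0/c0) ≤ Real.sqrt (L/c0) := Real.sqrt_le_sqrt (by gcongr)
    have h2 : Real.sqrt (L0/c0) = (2*B+1)/(σ*(Real.sqrt 2 - 1)) := by
      rw [hL0def, mul_div_assoc, div_self (ne_of_gt hc0R), mul_one]
      exact Real.sqrt_sq (div_nonneg (by linarith) hpos.le)
    linarith
  have hcontra : 2*B+1 ≤ σ*(Real.sqrt 2 - 1) * Real.sqrt (L/c0) := by
    have h3 := mul_le_mul_of_nonneg_left hsqL0 hpos.le
    have h4 : σ*(Real.sqrt 2 - 1) * ((2*B+1)/(σ*(Real.sqrt 2 - 1))) = 2*B+1 := by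
      field_simp
    linarith
  linarith


lemma mcomp (k : Fin K) : Tendsto (fun t => m k (cnt a k t)) atTop (𝓝 (μ k)) :=
  (hm k).comp (cnt_atTop a hσ hm hinit ha k)

lemma cnt_upper (kstar k : Fin K) (ε : ℝ) (hε : 0 < ε) (hεΔ : ε < μ kstar - μ k) :
    ∃ T1 : ℕ, K ≤ T1 ∧ ∀ T, T1 ≤ T →
      (cnt a k T : ℝ) ≤ 2*σ^2/((μ kstar - μ k)-ε)^2 * Real.log ((T:ℝ)+1)
        + ((cnt a k T1 : ℝ) + 1) := by
  set Δk := μ kstar - μ k with hΔk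
  have hΔpos : 0 < Δk := lt_trans hε hεΔ
  have h1 : ∀ᶠ t : ℕ in atTop, μ kstar - ε/2 < m kstar (cnt a kstar t) :=
    (mcomp a hσ hm hinit ha kstar).eventually_const_lt (by linarith)
  have h2 : ∀ᶠ t : ℕ in atTop, m k (cnt a k t) < μ k + ε/2 :=
    (mcomp a hσ hm hinit ha k).eventually_lt_const (by linarith)
  obtain ⟨T0, hT0⟩ := eventually_atTop.mp (h1.and h2)
  refine ⟨max T0 K, le_max_right _ _, ?_⟩
  set T1 := max T0 K with hT1
  have hcoef : 0 ≤ 2*σ^2/(Δk-ε)^2 := by positivity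
  -- key step at play times
  have key : ∀ t, T1 ≤ t → a (t+1) = k →
      (cnt a k (t+1) : ℝ) ≤ 2*σ^2/(Δk-ε)^2 * Real.log ((t:ℝ)+1) + 1 := by
    intro t ht hat
    have htK : K ≤ t := le_trans (le_max_right _ _) ht
    have hT0t := hT0 t (le_trans (le_max_left _ _) ht)
    have hidx := ha t htK kstar
    rw [hat] at hidx
    have hlog : 0 ≤ Real.log ((t:ℝ)+1) := Real.log_nonneg (by have : (0:ℝ) ≤ (t:ℝ) := Nat.cast_nonneg t; linarith)
    have hcpos : (0:ℝ) < (cnt a k t : ℝ) := by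
      exact_mod_cast cnt_one a hσ hm hinit ha k t htK
    set x : ℝ := 2 * Real.log ((t:ℝ)+1) / (cnt a k t : ℝ) with hx
    have hx0 : 0 ≤ x := div_nonneg (by linarith) hcpos.le
    have hsqrt0 : 0 ≤ Real.sqrt (2 * Real.log ((t:ℝ)+1) / (cnt a kstar t : ℝ)) :=
      Real.sqrt_nonneg _
    have hineq : Δk - ε ≤ σ * Real.sqrt x := by
      have := hT0t.1
      have := hT0t.2
      nlinarith [mul_nonneg hσ.le hsqrt0]
    have hsq : (Δk - ε)^2 ≤ σ^2 * x := by
      have h := mul_le_mul_of_nonneg_left hineq (by linarith : (0:ℝ) ≤ Δk - ε)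
      have h2 := mul_le_mul_of_nonneg_left hineq (mul_nonneg hσ.le (Real.sqrt_nonneg x))
      have hss : Real.sqrt x * Real.sqrt x = x := Real.mul_self_sqrt hx0
      nlinarith
    have hcnt : (cnt a k t : ℝ) ≤ 2*σ^2/(Δk-ε)^2 * Real.log ((t:ℝ)+1) := by
      rw [hx] at hsq
      have hΔε2 : (0:ℝ) < (Δk-ε)^2 := pow_pos (by linarith) 2
      rw [div_mul_eq_mul_div, le_div_iff₀ hΔε2]
      have h6 := mul_le_mul_of_nonneg_left hsq hcpos.le
      have h7 : (cnt a k t : ℝ) * (σ^2 * (2*Real.log ((t:ℝ)+1)/(cnt a k t : ℝ)))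
          = 2*σ^2*Real.log ((t:ℝ)+1) := by
        field_simp
      exact le_trans h6 (le_of_eq h7)
    have hstep : cnt a k (t+1) = cnt a k t + 1 := by
      rw [cnt_succ, hat]
      simp
    rw [hstep]
    push_cast
    linarith
  -- propagate to all T
  intro T hT
  by_cases hc : cnt a k T ≤ cnt a k T1
  · have : (cnt a k T : ℝ) ≤ (cnt a k T1 : ℝ) := by exact_mod_cast hc
    have hlogT : 0 ≤ Real.log ((T:ℝ)+1) := Real.log_nonneg (by have : (0:ℝ) ≤ (T:ℝ) := Nat.cast_nonneg T; linarith)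
    nlinarith
  · push_neg at hc
    obtain ⟨s, hs1, hsT, has, hcT⟩ := lastPlay a k T (by omega)
    have hsT1 : T1 + 1 ≤ s := by
      by_contra hss
      push_neg at hss
      have h3 : cnt a k s = cnt a k (s-1) + 1 := by
        have hs' : s = (s-1)+1 := by omega
        rw [hs', cnt_succ, ← hs']
        simp [has]
      have h4 : cnt a k s ≤ cnt a k T1 := cnt_mono a k (by omega)
      omega
    have h3' : cnt a k s = cnt a k (s-1) + 1 := by
      have hs' : s = (s-1)+1 := by omega
      rw [hs', cnt_succ, ← hs']
      simp [has]
    set t := s - 1 with htdef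
    have hts : t + 1 = s := by omega
    have hat : a (t+1) = k := by rw [hts]; exact has
    have hkey := key t (by omega) hat
    have hcnteq : cnt a k T = cnt a k (t+1) := by rw [hts]; omega
    have hlogle : Real.log ((t:ℝ)+1) ≤ Real.log ((T:ℝ)+1) := by
      apply Real.log_le_log (by positivity)
      have : (t:ℝ)+1 = (s:ℝ) := by exact_mod_cast hts
      rw [this]
      have : (s:ℝ) ≤ (T:ℝ) := by exact_mod_cast hsT
      linarith
    rw [hcnteq]
    have := mul_le_mul_of_nonneg_left hlogle hcoef
    have hc1 : (0:ℝ) ≤ cnt a k T1 := by positivity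
    linarith


lemma sumbound (kstar : Fin K) (hopt : ∀ k, k ≠ kstar → μ k < μ kstar) :
    ∃ C1 C2 : ℝ, 0 ≤ C1 ∧ 0 ≤ C2 ∧ ∀ᶠ T : ℕ in atTop,
      (∑ k' ∈ Finset.univ.filter (fun k' => k' ≠ kstar), (cnt a k' T : ℝ))
        ≤ C1 * Real.log ((T:ℝ)+1) + C2 := by
  classical
  have hall : ∀ k' : Fin K, ∃ C1' C2' : ℝ, 0 ≤ C1' ∧ 0 ≤ C2' ∧
      (k' ≠ kstar → ∀ᶠ T : ℕ in atTop,
        (cnt a k' T : ℝ) ≤ C1' * Real.log ((T:ℝ)+1) + C2') := by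
    intro k'
    by_cases hk' : k' = kstar
    · exact ⟨0, 0, le_refl _, le_refl _, fun h => absurd hk' h⟩
    · have hgap : 0 < μ kstar - μ k' := sub_pos.mpr (hopt k' hk')
      obtain ⟨T1, hT1K, hbd⟩ := cnt_upper a hσ hm hinit ha kstar k'
        ((μ kstar - μ k')/2) (by linarith) (by linarith)
      refine ⟨2*σ^2/((μ kstar - μ k')-(μ kstar - μ k')/2)^2, (cnt a k' T1 : ℝ) + 1,
        by positivity, by positivity, fun _ => ?_⟩
      filter_upwards [eventually_ge_atTop T1] with T hT
      exact hbd T hT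
  choose C1f C2f hC1f hC2f hbdf using hall
  set S := Finset.univ.filter (fun k' : Fin K => k' ≠ kstar) with hS
  refine ⟨∑ k' ∈ S, C1f k', ∑ k' ∈ S, C2f k',
    Finset.sum_nonneg (fun i _ => hC1f i), Finset.sum_nonneg (fun i _ => hC2f i), ?_⟩
  have hev : ∀ᶠ T : ℕ in atTop, ∀ k' ∈ S,
      (cnt a k' T : ℝ) ≤ C1f k' * Real.log ((T:ℝ)+1) + C2f k' := by
    rw [eventually_all_finset]
    intro k' hk'
    exact hbdf k' (Finset.mem_filter.mp hk').2
  filter_upwards [hev] with T hT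
  calc ∑ k' ∈ S, (cnt a k' T : ℝ) ≤ ∑ k' ∈ S, (C1f k' * Real.log ((T:ℝ)+1) + C2f k') :=
        Finset.sum_le_sum hT
    _ = (∑ k' ∈ S, C1f k') * Real.log ((T:ℝ)+1) + ∑ k' ∈ S, C2f k' := by
        rw [Finset.sum_add_distrib, Finset.sum_mul]

end Main

lemma loglim : Tendsto (fun T : ℕ => Real.log ((T:ℝ)+1) / Real.log T) atTop (𝓝 1) := by
  have hlogT : Tendsto (fun T : ℕ => Real.log T) atTop atTop :=
    Real.tendsto_log_atTop.comp tendsto_natCast_atTop_atTop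
  have h0 : Tendsto (fun T : ℕ => Real.log 2 / Real.log T) atTop (𝓝 0) :=
    Tendsto.div_atTop tendsto_const_nhds hlogT
  have hup : Tendsto (fun T : ℕ => 1 + Real.log 2 / Real.log T) atTop (𝓝 1) := by
    simpa using tendsto_const_nhds.add h0
  apply tendsto_of_tendsto_of_tendsto_of_le_of_le' (tendsto_const_nhds (x := (1:ℝ))) hup
  · filter_upwards [eventually_ge_atTop 2] with T hT
    have h2 : (2:ℝ) ≤ (T:ℝ) := by exact_mod_cast hT
    have hlogpos : 0 < Real.log T := Real.log_pos (by linarith)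
    rw [le_div_iff₀ hlogpos, one_mul]
    exact Real.log_le_log (by linarith) (by linarith)
  · filter_upwards [eventually_ge_atTop 2] with T hT
    have h2 : (2:ℝ) ≤ (T:ℝ) := by exact_mod_cast hT
    have hlogpos : 0 < Real.log T := Real.log_pos (by linarith)
    rw [div_le_iff₀ hlogpos]
    have h3 : Real.log ((T:ℝ)+1) ≤ Real.log (2*T) :=
      Real.log_le_log (by linarith) (by linarith)
    have h4 : Real.log (2*(T:ℝ)) = Real.log 2 + Real.log T :=
      Real.log_mul (by norm_num) (by linarith)
    have h5 : (1 + Real.log 2 / Real.log (T:ℝ)) * Real.log (T:ℝ)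
        = Real.log (T:ℝ) + Real.log 2 := by field_simp
    linarith

lemma logdiv : Tendsto (fun T : ℕ => Real.log ((T:ℝ)+1) / (T:ℝ)) atTop (𝓝 0) := by
  have h1 : Tendsto (fun T : ℕ => Real.log ((T:ℝ)+1) / ((T:ℝ)+1)) atTop (𝓝 0) := by
    have hb : Tendsto (fun x : ℝ => Real.log x / x) atTop (𝓝 0) := by
      have := Real.isLittleO_log_id_atTop.tendsto_div_nhds_zero
      simpa using this
    exact hb.comp (tendsto_atTop_add_const_right atTop 1 tendsto_natCast_atTop_atTop)
  have h2 : Tendsto (fun T : ℕ => ((T:ℝ)+1) / (T:ℝ)) atTop (𝓝 1) := by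
    have h3 : Tendsto (fun T : ℕ => 1 + 1/(T:ℝ)) atTop (𝓝 1) := by
      simpa using tendsto_const_nhds.add (tendsto_one_div_atTop_nhds_zero_nat (𝕜 := ℝ))
    apply h3.congr'
    filter_upwards [eventually_ge_atTop 1] with T hT
    have hT0 : (T:ℝ) ≠ 0 := by
      have : (1:ℝ) ≤ (T:ℝ) := by exact_mod_cast hT
      linarith
    field_simp
  have h4 := h1.mul h2
  rw [zero_mul] at h4
  apply h4.congr'
  filter_upwards [eventually_ge_atTop 1] with T hT
  have h5 : (T:ℝ) ≠ 0 := by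
    have : (1:ℝ) ≤ (T:ℝ) := by exact_mod_cast hT
    linarith
  have h6 : (T:ℝ)+1 ≠ 0 := by positivity
  field_simp


section Final
variable {σ : ℝ} (hσ : 0 < σ) {μ : Fin K → ℝ} {m : Fin K → ℕ → ℝ}
  (hm : ∀ k, Tendsto (fun n => m k n) atTop (𝓝 (μ k)))
  (hinit : ∀ k, cnt a k K = 1)
  (ha : ∀ t, K ≤ t → ∀ k,
    m k (cnt a k t) + σ * Real.sqrt (2 * Real.log ((t : ℝ) + 1) / (cnt a k t : ℝ))
      ≤ m (a (t+1)) (cnt a (a (t+1)) t)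
          + σ * Real.sqrt (2 * Real.log ((t : ℝ) + 1) / (cnt a (a (t+1)) t : ℝ)))

include hσ hm hinit ha

theorem det_tendsto (kstar : Fin K) (hopt : ∀ k, k ≠ kstar → μ k < μ kstar)
    (k : Fin K) (hk : k ≠ kstar) :
    Tendsto (fun T : ℕ => (cnt a k T : ℝ) / Real.log T) atTop
      (𝓝 (2*σ^2/(μ kstar - μ k)^2)) := by
  have hlogT : Tendsto (fun T : ℕ => Real.log T) atTop atTop :=
    Real.tendsto_log_atTop.comp tendsto_natCast_atTop_atTop
  set Δk := μ kstar - μ k with hΔkdef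
  have hΔpos : 0 < Δk := sub_pos.mpr (hopt k hk)
  rw [tendsto_order]
  constructor
  · -- lower bound
    intro b hb
    have hchoice : ∃ ε : ℝ, 0 < ε ∧ b < 2*σ^2/(Δk+ε)^2 := by
      rcases le_or_gt b 0 with hb0 | hb0
      · exact ⟨1, one_pos, lt_of_le_of_lt hb0 (by positivity)⟩
      · have hr2 : (Real.sqrt (2*σ^2/b))^2 = 2*σ^2/b := Real.sq_sqrt (by positivity)
        set r := Real.sqrt (2*σ^2/b) with hrdef
        have hr0 : 0 ≤ r := Real.sqrt_nonneg _
        have hΔ2 : Δk^2 < 2*σ^2/b := by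
          rw [lt_div_iff₀ hb0]
          rw [lt_div_iff₀ (pow_pos hΔpos 2)] at hb
          linarith
        have hΔr : Δk < r := by nlinarith
        refine ⟨(r - Δk)/2, by linarith, ?_⟩
        have h1 : (Δk + (r-Δk)/2)^2 < 2*σ^2/b := by nlinarith
        rw [lt_div_iff₀ (pow_pos (by linarith : (0:ℝ) < Δk + (r-Δk)/2) 2)]
        rw [lt_div_iff₀ hb0] at h1
        linarith
    obtain ⟨ε, hε, hεb⟩ := hchoice
    obtain ⟨C1, C2, hC1, hC2, hsumev⟩ := sumbound a hσ hm hinit ha kstar hopt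
    obtain ⟨T3, hT3⟩ := eventually_atTop.mp hsumev
    have hev1 : ∀ᶠ t : ℕ in atTop, μ k - ε/4 < m k (cnt a k t) :=
      (mcomp a hσ hm hinit ha k).eventually_const_lt (by linarith)
    have hev2 : ∀ᶠ t : ℕ in atTop, m kstar (cnt a kstar t) < μ kstar + ε/4 :=
      (mcomp a hσ hm hinit ha kstar).eventually_lt_const (by linarith)
    obtain ⟨T2, hT2⟩ := eventually_atTop.mp (hev1.and hev2)
    have hT4ev : ∀ᶠ T : ℕ in atTop, C1 * Real.log ((T:ℝ)+1) + C2 + 2 ≤ (T:ℝ)/2 := by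
      have hlim : Tendsto (fun T : ℕ => (C1 * Real.log ((T:ℝ)+1) + C2 + 2)/(T:ℝ))
          atTop (𝓝 0) := by
        have l1 := logdiv.const_mul C1
        have l2 : Tendsto (fun T : ℕ => (C2+2)/(T:ℝ)) atTop (𝓝 0) :=
          tendsto_const_div_atTop_nhds_zero_nat _
        have heq : (fun T : ℕ => (C1 * Real.log ((T:ℝ)+1) + C2 + 2)/(T:ℝ))
            = fun T : ℕ => C1*(Real.log ((T:ℝ)+1)/(T:ℝ)) + (C2+2)/(T:ℝ) := by
          funext T
          ring
        rw [heq]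
        simpa using l1.add l2
      have hev := hlim.eventually_lt_const (by norm_num : (0:ℝ) < 1/2)
      filter_upwards [hev, eventually_ge_atTop 1] with T h1 h2
      have hTpos : (0:ℝ) < T := by exact_mod_cast h2
      rw [div_lt_iff₀ hTpos] at h1
      linarith
    obtain ⟨T4, hT4⟩ := eventually_atTop.mp hT4ev
    have hT5ev : ∀ᶠ T : ℕ in atTop,
        σ * Real.sqrt (4*Real.log ((T:ℝ)+1)/(T:ℝ)) < ε/4 := by
      have l1 : Tendsto (fun T : ℕ => 4*Real.log ((T:ℝ)+1)/(T:ℝ)) atTop (𝓝 0) := by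
        have := logdiv.const_mul 4
        have heq : (fun T : ℕ => 4*Real.log ((T:ℝ)+1)/(T:ℝ))
            = fun T : ℕ => 4*(Real.log ((T:ℝ)+1)/(T:ℝ)) := by
          funext T
          ring
        rw [heq]
        simpa using this
      have l2 : Tendsto (fun T : ℕ => Real.sqrt (4*Real.log ((T:ℝ)+1)/(T:ℝ))) atTop (𝓝 0) :=
        (Real.continuous_sqrt.tendsto' 0 0 Real.sqrt_zero).comp l1
      have l3 : Tendsto (fun T : ℕ => σ * Real.sqrt (4*Real.log ((T:ℝ)+1)/(T:ℝ))) atTop (𝓝 0) := by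
        simpa using l2.const_mul σ
      exact l3.eventually_lt_const (by linarith)
    obtain ⟨T5, hT5⟩ := eventually_atTop.mp hT5ev
    have hglt : Tendsto (fun T : ℕ => 2*σ^2/(Δk+ε)^2 * (1 - Real.log 2/Real.log (T:ℝ)))
        atTop (𝓝 (2*σ^2/(Δk+ε)^2)) := by
      have h0 : Tendsto (fun T : ℕ => Real.log 2/Real.log (T:ℝ)) atTop (𝓝 0) :=
        Tendsto.div_atTop tendsto_const_nhds hlogT
      have := ((tendsto_const_nhds (x := (1:ℝ))).sub h0).const_mul (2*σ^2/(Δk+ε)^2)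
      simpa using this
    have hmain : ∀ᶠ T : ℕ in atTop,
        2*σ^2/(Δk+ε)^2 * (1 - Real.log 2/Real.log (T:ℝ)) ≤ (cnt a k T : ℝ)/Real.log T := by
      filter_upwards [eventually_ge_atTop K, eventually_ge_atTop T3, eventually_ge_atTop T4,
        eventually_ge_atTop T5, eventually_ge_atTop (2*T2+16), eventually_ge_atTop (2*K+16),
        eventually_ge_atTop 2] with T h_K h_3 h_4 h_5 h_T2 h_K2 h_ge2
      have hcst : 1 ≤ cnt a kstar T := cnt_one a hσ hm hinit ha kstar T h_K
      obtain ⟨s, hs1, hsT, has, hcT⟩ := lastPlay a kstar T hcst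
      have h3' : cnt a kstar s = cnt a kstar (s-1) + 1 := by
        have hs' : s = (s-1)+1 := by omega
        rw [hs', cnt_succ, ← hs']
        simp [has]
      have hsplit : ((T:ℕ):ℝ) = (cnt a kstar T : ℝ)
          + ∑ k' ∈ Finset.univ.filter (fun k' => k' ≠ kstar), (cnt a k' T:ℝ) := by
        have h := sum_cnt a T
        have h2 : cnt a kstar T
            + ∑ k' ∈ Finset.univ.filter (fun k' => k' ≠ kstar), cnt a k' T = T := by
          have hfe : Finset.univ.filter (fun k' : Fin K => ¬ k' ≠ kstar) = {kstar} := by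
            ext x
            simp
          have hsplit2 := Finset.sum_filter_add_sum_filter_not Finset.univ
            (fun k' => k' ≠ kstar) (fun k' => cnt a k' T)
          rw [hfe, Finset.sum_singleton] at hsplit2
          omega
        exact_mod_cast h2.symm
      have hsum := hT3 T h_3
      have h4' := hT4 T h_4
      have hckeq : cnt a kstar T = cnt a kstar s := by omega
      have hck : (cnt a kstar T : ℝ) ≤ (s:ℝ) := by
        rw [hckeq]
        exact_mod_cast cnt_le a kstar s
      have hsge : (T:ℝ)/2 + 2 ≤ (s:ℝ) := by linarith
      have hTr : (2*T2+16:ℝ) ≤ (T:ℝ) := by exact_mod_cast h_T2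
      have hKr : (2*K+16:ℝ) ≤ (T:ℝ) := by exact_mod_cast h_K2
      have hsN : T2 + 6 ≤ s := by
        have hc : ((T2+6:ℕ):ℝ) ≤ (s:ℝ) := by
          push_cast
          linarith
        exact_mod_cast hc
      have hKN : K + 6 ≤ s := by
        have hc : ((K+6:ℕ):ℝ) ≤ (s:ℝ) := by
          push_cast
          linarith
        exact_mod_cast hc
      set t := s - 1 with htdef
      have hts : t + 1 = s := by omega
      have htK : K ≤ t := by omega
      have htT2 : T2 ≤ t := by omega
      have hat : a (t+1) = kstar := by rw [hts]; exact has
      have hidx := ha t htK k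
      rw [hat] at hidx
      have hcastts : ((t:ℝ)+1) = (s:ℝ) := by exact_mod_cast hts
      rw [hcastts] at hidx
      have hm1 := (hT2 t htT2).1
      have hm2 := (hT2 t htT2).2
      have hTpos : (0:ℝ) < T := by linarith
      have hcstt : (T:ℝ)/2 + 1 ≤ (cnt a kstar t : ℝ) := by
        have hcc : cnt a kstar t + 1 = cnt a kstar T := by omega
        have hccr : (cnt a kstar t:ℝ) + 1 = (cnt a kstar T:ℝ) := by exact_mod_cast hcc
        linarith
      have hs1r : (1:ℝ) ≤ (s:ℝ) := by exact_mod_cast hs1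
      have hsTr : (s:ℝ) ≤ (T:ℝ) := by exact_mod_cast hsT
      have hlogs0 : 0 ≤ Real.log (s:ℝ) := Real.log_nonneg hs1r
      have hlogsT : Real.log (s:ℝ) ≤ Real.log ((T:ℝ)+1) :=
        Real.log_le_log (by linarith) (by linarith)
      have hlogT10 : 0 ≤ Real.log ((T:ℝ)+1) := le_trans hlogs0 hlogsT
      have hcsttpos : (0:ℝ) < (cnt a kstar t:ℝ) := by linarith
      have hb1 : Real.sqrt (2*Real.log (s:ℝ)/(cnt a kstar t:ℝ))
          ≤ Real.sqrt (4*Real.log ((T:ℝ)+1)/(T:ℝ)) := by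
        apply Real.sqrt_le_sqrt
        have step1 : 2*Real.log (s:ℝ)/(cnt a kstar t:ℝ)
            ≤ 2*Real.log ((T:ℝ)+1)/((T:ℝ)/2) :=
          div_le_div₀ (by linarith) (by linarith) (by linarith) (by linarith)
        have step2 : 2*Real.log ((T:ℝ)+1)/((T:ℝ)/2) = 4*Real.log ((T:ℝ)+1)/(T:ℝ) := by
          field_simp
          ring
        linarith
      have hbstar : σ * Real.sqrt (2*Real.log (s:ℝ)/(cnt a kstar t:ℝ)) ≤ ε/4 := by
        have h5' := hT5 T h_5
        have h6' := mul_le_mul_of_nonneg_left hb1 hσ.le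
        linarith
      have hkb : σ * Real.sqrt (2*Real.log (s:ℝ)/(cnt a k t:ℝ)) ≤ Δk + ε := by
        have hΔeq : Δk = μ kstar - μ k := hΔkdef
        linarith [hidx, hm1, hm2, hbstar, hε]
      have hckt1 : (1:ℝ) ≤ (cnt a k t:ℝ) := by
        exact_mod_cast cnt_one a hσ hm hinit ha k t htK
      have hcktT : (cnt a k t:ℝ) ≤ (cnt a k T:ℝ) := by
        exact_mod_cast cnt_mono a k (show t ≤ T by omega)
      have hkb2 : σ * Real.sqrt (2*Real.log (s:ℝ)/(cnt a k T:ℝ)) ≤ Δk + ε := by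
        have hmono : Real.sqrt (2*Real.log (s:ℝ)/(cnt a k T:ℝ))
            ≤ Real.sqrt (2*Real.log (s:ℝ)/(cnt a k t:ℝ)) :=
          Real.sqrt_le_sqrt (div_le_div₀ (by linarith) (le_refl _) (by linarith) hcktT)
        have := mul_le_mul_of_nonneg_left hmono hσ.le
        linarith
      have hcTpos : (0:ℝ) < (cnt a k T:ℝ) := by linarith
      have hsq : 2*σ^2*Real.log (s:ℝ) ≤ (Δk+ε)^2 * (cnt a k T:ℝ) := by
        have hx0 : 0 ≤ 2*Real.log (s:ℝ)/(cnt a k T:ℝ) := div_nonneg (by linarith) (by linarith)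
        have hss := Real.mul_self_sqrt hx0
        have h0 : 0 ≤ σ * Real.sqrt (2*Real.log (s:ℝ)/(cnt a k T:ℝ)) :=
          mul_nonneg hσ.le (Real.sqrt_nonneg _)
        have hΔε0 : (0:ℝ) ≤ Δk + ε := by linarith
        have hmm := mul_le_mul hkb2 hkb2 h0 hΔε0
        have h1 : σ^2 * (2*Real.log (s:ℝ)/(cnt a k T:ℝ)) ≤ (Δk+ε)^2 := by
          have he : σ * Real.sqrt (2*Real.log (s:ℝ)/(cnt a k T:ℝ))
              * (σ * Real.sqrt (2*Real.log (s:ℝ)/(cnt a k T:ℝ)))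
              = σ^2 * (2*Real.log (s:ℝ)/(cnt a k T:ℝ)) := by
            rw [show σ * Real.sqrt (2*Real.log (s:ℝ)/(cnt a k T:ℝ))
              * (σ * Real.sqrt (2*Real.log (s:ℝ)/(cnt a k T:ℝ)))
              = σ^2 * (Real.sqrt (2*Real.log (s:ℝ)/(cnt a k T:ℝ))
                * Real.sqrt (2*Real.log (s:ℝ)/(cnt a k T:ℝ))) by ring, hss]
          calc σ^2 * (2*Real.log (s:ℝ)/(cnt a k T:ℝ)) = _ := he.symm
            _ ≤ (Δk+ε)*(Δk+ε) := hmm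
            _ = (Δk+ε)^2 := by ring
        have h3 : σ^2*(2*Real.log (s:ℝ)/(cnt a k T:ℝ))*(cnt a k T:ℝ)
            = 2*σ^2*Real.log (s:ℝ) := by
          field_simp
        have h4 := mul_le_mul_of_nonneg_right h1 hcTpos.le
        exact le_trans (le_of_eq h3.symm) h4
      have hlogs : Real.log (T:ℝ) - Real.log 2 ≤ Real.log (s:ℝ) := by
        have h1 : Real.log ((T:ℝ)/2) ≤ Real.log (s:ℝ) :=
          Real.log_le_log (by linarith) (by linarith)
        have h2 : Real.log ((T:ℝ)/2) = Real.log (T:ℝ) - Real.log 2 :=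
          Real.log_div (by linarith) (by norm_num)
        linarith
      have hlogTpos : 0 < Real.log (T:ℝ) := Real.log_pos (by linarith)
      have hfin : 2*σ^2*(Real.log (T:ℝ) - Real.log 2)/(Δk+ε)^2 ≤ (cnt a k T:ℝ) := by
        rw [div_le_iff₀ (pow_pos (by linarith) 2)]
        have := mul_le_mul_of_nonneg_left hlogs (by positivity : (0:ℝ) ≤ 2*σ^2)
        linarith
      have heq : 2*σ^2/(Δk+ε)^2*(1 - Real.log 2/Real.log (T:ℝ))
          = (2*σ^2*(Real.log (T:ℝ) - Real.log 2)/(Δk+ε)^2)/Real.log (T:ℝ) := by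
        have hne1 : Real.log (T:ℝ) ≠ 0 := ne_of_gt hlogTpos
        have hne2 : (Δk+ε)^2 ≠ 0 := ne_of_gt (pow_pos (by linarith) 2)
        field_simp
      rw [heq]
      gcongr
    filter_upwards [hmain, hglt.eventually_const_lt hεb] with T h1 h2
    linarith
  · -- upper bound
    intro b hb
    have hbpos : 0 < b := lt_trans (by positivity) hb
    have hchoice : ∃ ε : ℝ, 0 < ε ∧ ε < Δk ∧ 2*σ^2/(Δk-ε)^2 < b := by
      have hr2 : (Real.sqrt (2*σ^2/b))^2 = 2*σ^2/b := Real.sq_sqrt (by positivity)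
      set r := Real.sqrt (2*σ^2/b) with hrdef
      have hr0 : 0 ≤ r := Real.sqrt_nonneg _
      have hb' : 2*σ^2/Δk^2 < b := hb
      have hΔ2 : 2*σ^2/b < Δk^2 := by
        rw [div_lt_iff₀ hbpos]
        rw [div_lt_iff₀ (pow_pos hΔpos 2)] at hb'
        linarith
      have hrΔ : r < Δk := by nlinarith
      refine ⟨(Δk - r)/2, by linarith, by linarith, ?_⟩
      have h1 : 2*σ^2/b < (Δk - (Δk-r)/2)^2 := by nlinarith
      rw [div_lt_iff₀ (pow_pos (by linarith : (0:ℝ) < Δk - (Δk-r)/2) 2)]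
      rw [div_lt_iff₀ hbpos] at h1
      linarith
    obtain ⟨ε, hε, hεΔ, hεb⟩ := hchoice
    obtain ⟨T1, hT1K, hbound⟩ := cnt_upper a hσ hm hinit ha kstar k ε hε (by rw [← hΔkdef]; exact hεΔ)
    set C := (cnt a k T1:ℝ)+1 with hCdef
    have hup : Tendsto (fun T : ℕ => 2*σ^2/(Δk-ε)^2 * (Real.log ((T:ℝ)+1)/Real.log (T:ℝ))
        + C/Real.log (T:ℝ)) atTop (𝓝 (2*σ^2/(Δk-ε)^2)) := by
      have h1 := loglim.const_mul (2*σ^2/(Δk-ε)^2)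
      have h2 : Tendsto (fun T : ℕ => C/Real.log (T:ℝ)) atTop (𝓝 0) :=
        Tendsto.div_atTop tendsto_const_nhds hlogT
      simpa using h1.add h2
    filter_upwards [hup.eventually_lt_const hεb, eventually_ge_atTop T1,
      eventually_ge_atTop 2] with T hT hTT1 hTg2
    have hT2r : (2:ℝ) ≤ (T:ℝ) := by exact_mod_cast hTg2
    have hlogTpos : 0 < Real.log (T:ℝ) := Real.log_pos (by linarith)
    have hbd := hbound T hTT1
    have hkey : (cnt a k T:ℝ)/Real.log (T:ℝ)
        ≤ 2*σ^2/(Δk-ε)^2 * (Real.log ((T:ℝ)+1)/Real.log (T:ℝ)) + C/Real.log (T:ℝ) := by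
      have heq : 2*σ^2/(Δk-ε)^2 * (Real.log ((T:ℝ)+1)/Real.log (T:ℝ)) + C/Real.log (T:ℝ)
          = (2*σ^2/(Δk-ε)^2 * Real.log ((T:ℝ)+1) + C)/Real.log (T:ℝ) := by
        rw [← mul_div_assoc, ← add_div]
      rw [heq]
      gcongr
    linarith

end Final
end Det

end UCBAux

/-- doc -/
theorem ucb_K_armed_misspecified_regret_slln
    {Ω : Type*} [MeasurableSpace Ω] (P : Measure Ω) [IsProbabilityMeasure P]
    (K : ℕ) (hK : 2 ≤ K)
    (σ : ℝ) (hσ : 0 < σ)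
    (μ : Fin K → ℝ) (kstar : Fin K) (hopt : ∀ k, k ≠ kstar → μ k < μ kstar)
    (Δ : Fin K → ℝ) (hΔ : ∀ k, Δ k = μ kstar - μ k)
    (ν : Fin K → Measure ℝ) (hνprob : ∀ k, IsProbabilityMeasure (ν k))
    (hνint : ∀ k, Integrable (fun x : ℝ => x) (ν k))
    (hνmean : ∀ k, ∫ x, x ∂(ν k) = μ k)
    (X : Fin K → ℕ → Ω → ℝ)
    (hXmeas : ∀ k j, Measurable (X k j))
    (hXdist : ∀ k j, 1 ≤ j → P.map (X k j) = ν k)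
    (hIndep : iIndepFun (m := fun _ => (inferInstance : MeasurableSpace ℝ))
      (fun q : Fin K × ℕ => X q.1 q.2) P)
    (A : ℕ → Ω → Fin K) (hAmeas : ∀ t, Measurable (A t))
    (N : Fin K → ℕ → Ω → ℕ)
    (hN : ∀ k t ω, N k t ω = ((Finset.Icc 1 t).filter (fun i => A i ω = k)).card)
    (μhat : Fin K → ℕ → Ω → ℝ)
    (hμhat : ∀ k n ω, μhat k n ω = (∑ j ∈ Finset.Icc 1 n, X k j ω) / (n : ℝ))
    (hInit : ∀ ω k, N k K ω = 1)
    (hA : ∀ t ω, K ≤ t → ∀ k,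
      μhat k (N k t ω) ω + σ * Real.sqrt (2 * Real.log ((t : ℝ) + 1) / (N k t ω : ℝ))
        ≤ μhat (A (t+1) ω) (N (A (t+1) ω) t ω) ω
            + σ * Real.sqrt (2 * Real.log ((t : ℝ) + 1) / (N (A (t+1) ω) t ω : ℝ)))
    (R : ℕ → Ω → ℝ)
    (hR : ∀ T ω, R T ω = ∑ k ∈ Finset.univ.filter (fun k => k ≠ kstar),
      Δ k * (N k T ω : ℝ)) :
    ∀ᵐ ω ∂P,
      (∀ k, k ≠ kstar →
        Tendsto (fun T : ℕ => (N k T ω : ℝ) / Real.log T) atTop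
          (𝓝 (2 * σ^2 / (Δ k)^2))) ∧
      Tendsto (fun T : ℕ => R T ω / Real.log T) atTop
        (𝓝 (∑ k ∈ Finset.univ.filter (fun k => k ≠ kstar), 2 * σ^2 / Δ k)) := by
  classical
  -- Step 1: strong law of large numbers for each arm's sample means
  have hslln : ∀ᵐ ω ∂P, ∀ k, Tendsto (fun n => μhat k n ω) atTop (𝓝 (μ k)) := by
    rw [ae_all_iff]
    intro k
    have hint : Integrable (X k 1) P := by
      have h1 : Integrable (fun x : ℝ => x) (P.map (X k 1)) := by
        rw [hXdist k 1 (le_refl 1)]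
        exact hνint k
      have := (integrable_map_measure aestronglyMeasurable_id
        (hXmeas k 1).aemeasurable).mp h1
      simpa using this
    have hindep : Pairwise (Function.onFun (IndepFun · · P) (fun j => X k (j+1))) := by
      intro i j hij
      exact hIndep.indepFun (show (⟨k, i+1⟩ : Fin K × ℕ) ≠ ⟨k, j+1⟩ by simp [hij])
    have hident : ∀ i, IdentDistrib (X k (i+1)) (X k (0+1)) P P := by
      intro i
      refine ⟨(hXmeas k (i+1)).aemeasurable, (hXmeas k 1).aemeasurable, ?_⟩
      rw [hXdist k (i+1) (by omega), hXdist k 1 (le_refl 1)]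
    have hs := strong_law_ae_real (fun j => X k (j+1)) hint hindep hident
    have hmean : ∫ ω, X k (0+1) ω ∂P = μ k := by
      have h2 : ∫ ω, X k 1 ω ∂P = ∫ x, x ∂(P.map (X k 1)) :=
        (integral_map (hXmeas k 1).aemeasurable aestronglyMeasurable_id).symm
      simpa [h2, hXdist k 1 (le_refl 1)] using hνmean k
    rw [hmean] at hs
    filter_upwards [hs] with ω hω
    apply hω.congr
    intro n
    rw [hμhat]
    congr 1
    rw [show Finset.Icc 1 n = Finset.Ico 1 (n+1) by rw [Finset.Ico_add_one_right_eq_Icc],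
      Finset.sum_Ico_eq_sum_range]
    simp [add_comm]
  -- Step 2: deterministic analysis on the SLLN event
  filter_upwards [hslln] with ω hω
  set aω : ℕ → Fin K := fun i => A i ω with haω
  have hcntN : ∀ k2 t, UCBAux.cnt aω k2 t = N k2 t ω := fun k2 t => (hN k2 t ω).symm
  have hinit' : ∀ k2, UCBAux.cnt aω k2 K = 1 := by
    intro k2
    rw [hcntN]
    exact hInit ω k2
  have ha' : ∀ t, K ≤ t → ∀ k2,
      μhat k2 (UCBAux.cnt aω k2 t) ω
        + σ * Real.sqrt (2 * Real.log ((t:ℝ)+1) / (UCBAux.cnt aω k2 t : ℝ))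
      ≤ μhat (aω (t+1)) (UCBAux.cnt aω (aω (t+1)) t) ω
        + σ * Real.sqrt (2 * Real.log ((t:ℝ)+1) / (UCBAux.cnt aω (aω (t+1)) t : ℝ)) := by
    intro t ht k2
    simp only [hcntN]
    exact hA t ω ht k2
  have hmaink : ∀ k2, k2 ≠ kstar → Tendsto (fun T : ℕ => ((N k2 T ω : ℝ))/Real.log T)
      atTop (𝓝 (2*σ^2/(μ kstar - μ k2)^2)) := by
    intro k2 hk2
    have hdet := UCBAux.det_tendsto aω hσ (m := fun k n => μhat k n ω) hω hinit' ha'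
      kstar hopt k2 hk2
    apply hdet.congr
    intro T
    rw [hcntN]
  constructor
  · intro k2 hk2
    rw [hΔ k2]
    exact hmaink k2 hk2
  · have hsumeq : ∀ T : ℕ, R T ω / Real.log T
        = ∑ k2 ∈ Finset.univ.filter (fun k2 => k2 ≠ kstar),
            Δ k2 * ((N k2 T ω : ℝ)/Real.log T) := by
      intro T
      rw [hR, Finset.sum_div]
      exact Finset.sum_congr rfl (fun k2 _ => mul_div_assoc _ _ _)
    apply Tendsto.congr (fun T => (hsumeq T).symm)
    apply tendsto_finset_sum
    intro k2 hk2
    have hk2' : k2 ≠ kstar := (Finset.mem_filter.mp hk2).2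
    have hΔpos : 0 < Δ k2 := by
      rw [hΔ]
      exact sub_pos.mpr (hopt k2 hk2')
    have hne : μ kstar - μ k2 ≠ 0 := by
      rw [hΔ] at hΔpos
      exact ne_of_gt hΔpos
    have heqlim : Δ k2 * (2*σ^2/(μ kstar - μ k2)^2) = 2*σ^2/Δ k2 := by
      rw [hΔ k2]
      field_simp
    rw [show (2 * σ^2 / Δ k2) = Δ k2 * (2*σ^2/(μ kstar - μ k2)^2) from heqlim.symm]
    exact (hmaink k2 hk2').const_mul (Δ k2)
end

section
/- Let c > 0 and let (G_j)_{j≥1} be independent random variables with G_j geometrically distributed on {1,2,…} with success probability p_j = min(1, exp(−jc)). Then log(∑_{j=1}^n G_j)/n → c almost surely as n → ∞. -/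
open MeasureTheory ProbabilityTheory Filter Finset Real Topology ENNReal

section Aux

variable {Ω : Type*} [MeasurableSpace Ω] (P : Measure Ω) [IsProbabilityMeasure P]

/-- Tail bound for a geometric random variable. -/
lemma geom_tail_bound {q : ℝ} (hq0 : 0 < q) (hq1 : q ≤ 1) (X : Ω → ℕ)
    (hdist : ∀ m : ℕ, 1 ≤ m → P {ω | X ω = m} = ENNReal.ofReal ((1 - q)^(m-1) * q))
    (m : ℕ) (hm : 1 ≤ m) :
    P {ω | m ≤ X ω} ≤ ENNReal.ofReal ((1 - q)^(m-1)) := by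
  have hr0 : 0 ≤ 1 - q := by linarith
  have hr1 : 1 - q < 1 := by linarith
  have hset : {ω | m ≤ X ω} = ⋃ k : ℕ, {ω | X ω = m + k} := by
    ext ω; simp [le_iff_exists_add]
  calc P {ω | m ≤ X ω} ≤ ∑' k : ℕ, P {ω | X ω = m + k} := hset ▸ measure_iUnion_le _
    _ = ∑' k : ℕ, ENNReal.ofReal (((1-q)^(m-1) * q) * (1-q)^k) := by
        refine tsum_congr fun k => ?_
        rw [hdist (m+k) (le_add_right hm)]
        congr 1
        have h1 : m + k - 1 = (m-1) + k := by omega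
        rw [h1, pow_add]; ring
    _ = ENNReal.ofReal (∑' k : ℕ, ((1-q)^(m-1) * q) * (1-q)^k) := by
        rw [ENNReal.ofReal_tsum_of_nonneg]
        · exact fun k => mul_nonneg (mul_nonneg (pow_nonneg hr0 _) hq0.le) (pow_nonneg hr0 _)
        · exact (summable_geometric_of_lt_one hr0 hr1).mul_left _
    _ = ENNReal.ofReal ((1-q)^(m-1)) := by
        rw [tsum_mul_left, tsum_geometric_of_lt_one hr0 hr1]
        congr 1
        have h2 : 1 - (1 - q) = q := by ring
        rw [h2, mul_assoc, mul_inv_cancel₀ hq0.ne', mul_one]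

/-- Head bound for a geometric random variable. -/
lemma geom_head_bound {q : ℝ} (hq0 : 0 < q) (hq1 : q ≤ 1) (X : Ω → ℕ)
    (h0 : P {ω | X ω = 0} = 0)
    (hdist : ∀ m : ℕ, 1 ≤ m → P {ω | X ω = m} = ENNReal.ofReal ((1 - q)^(m-1) * q))
    (m : ℕ) :
    P {ω | X ω ≤ m} ≤ ENNReal.ofReal ((m : ℝ) * q) := by
  have hr0 : 0 ≤ 1 - q := by linarith
  have hr1 : 1 - q ≤ 1 := by linarith
  have hsub : {ω | X ω ≤ m} ⊆ ⋃ i ∈ Finset.range (m+1), {ω | X ω = i} := by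
    intro ω hω
    simp only [Set.mem_iUnion]
    exact ⟨X ω, Finset.mem_range.mpr (Nat.lt_succ_of_le hω), rfl⟩
  calc P {ω | X ω ≤ m}
      ≤ ∑ i ∈ Finset.range (m+1), P {ω | X ω = i} :=
        (measure_mono hsub).trans (measure_biUnion_finset_le _ _)
    _ = (∑ i ∈ Finset.range m, P {ω | X ω = i+1}) + P {ω | X ω = 0} :=
        Finset.sum_range_succ' _ m
    _ ≤ (∑ _i ∈ Finset.range m, ENNReal.ofReal q) + 0 := by
        gcongr with i _
        · rw [hdist (i+1) (Nat.le_add_left 1 i)]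
          apply ENNReal.ofReal_le_ofReal
          have : (1-q)^(i+1-1) ≤ 1 := pow_le_one₀ hr0 hr1
          nlinarith
        · exact h0.le
    _ = ENNReal.ofReal ((m : ℝ) * q) := by
        rw [Finset.sum_const, Finset.card_range, add_zero,
          ENNReal.ofReal_mul (by positivity), ENNReal.ofReal_natCast, nsmul_eq_mul]

lemma summable_exp_neg_nat {ε : ℝ} (hε : 0 < ε) :
    Summable (fun j : ℕ => Real.exp (-(j:ℝ) * ε)) := by
  have h : (fun j : ℕ => Real.exp (-(j:ℝ) * ε)) = fun j : ℕ => (Real.exp (-ε))^j := by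
    funext j
    rw [← Real.exp_nat_mul]
    congr 1; ring
  rw [h]
  exact summable_geometric_of_lt_one (Real.exp_pos _).le
    (Real.exp_lt_one_iff.mpr (by linarith))

lemma tsum_meas_ne_top {s : ℕ → Set Ω} {b : ℕ → ℝ}
    (hb : ∀ n, P (s n) ≤ ENNReal.ofReal (b n)) (hbnn : ∀ n, 0 ≤ b n)
    (hsum : Summable b) : (∑' n, P (s n)) ≠ ∞ := by
  have h1 : (∑' n, P (s n)) ≤ ∑' n, ENNReal.ofReal (b n) := ENNReal.tsum_le_tsum hb
  have h2 : (∑' n, ENNReal.ofReal (b n)) = ENNReal.ofReal (∑' n, b n) :=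
    (ENNReal.ofReal_tsum_of_nonneg hbnn hsum).symm
  exact ne_top_of_le_ne_top (h2 ▸ ENNReal.ofReal_ne_top) h1

end Aux

/-- **SLLN for sums of geometric random variables with exponentially decaying success
probabilities (the coupled geometric approximation process in the proof of Theorem 1).**
Let `c > 0` and let `G j` be independent random variables, with `G j` geometrically
distributed on `{1,2,…}` with success probability `p j = min 1 (exp(-j c))`, i.e.
`P(G j = m) = (1 - p j)^(m-1) * p j` for `m ≥ 1`.  Then
`log(∑_{j=1}^n G j) / n → c` almost surely. -/
theorem log_sum_geometric_tendsto
    {Ω : Type*} [MeasurableSpace Ω] (P : Measure Ω) [IsProbabilityMeasure P]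
    (c : ℝ) (hc : 0 < c)
    (p : ℕ → ℝ) (hp : ∀ j, p j = min 1 (Real.exp (-(j : ℝ) * c)))
    (G : ℕ → Ω → ℕ) (hGmeas : ∀ j, Measurable (G j))
    (hGindep : iIndepFun G P)
    (hGpos : ∀ j, P {ω | G j ω = 0} = 0)
    (hGdist : ∀ j, ∀ m : ℕ, 1 ≤ m →
      P {ω | G j ω = m} = ENNReal.ofReal ((1 - p j)^(m - 1) * p j)) :
    ∀ᵐ ω ∂P, Tendsto (fun n : ℕ =>
        Real.log (∑ j ∈ Finset.Icc 1 n, (G j ω : ℝ)) / (n : ℝ))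
      atTop (𝓝 c) := by
  have hp_pos : ∀ j, 0 < p j := fun j => by
    rw [hp]; exact lt_min one_pos (Real.exp_pos _)
  have hp_le1 : ∀ j, p j ≤ 1 := fun j => by rw [hp]; exact min_le_left _ _
  have hp_le : ∀ j : ℕ, p j ≤ Real.exp (-(j:ℝ) * c) := fun j => by
    rw [hp]; exact min_le_right _ _
  have hp_eq : ∀ j : ℕ, 1 ≤ j → p j = Real.exp (-(j:ℝ) * c) := by
    intro j hj
    rw [hp]
    refine min_eq_right (Real.exp_le_one_iff.mpr ?_)
    have h1 : (1:ℝ) ≤ (j:ℝ) := by exact_mod_cast hj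
    nlinarith
  set ε : ℕ → ℝ := fun k => c / (k+2) with hεdef
  have hε_pos : ∀ k, 0 < ε k := fun k => div_pos hc (by positivity)
  -- Upper bound events (Borel–Cantelli)
  have hupper : ∀ k : ℕ, ∀ᵐ ω ∂P, ∀ᶠ j : ℕ in atTop,
      (G j ω : ℝ) < Real.exp ((j:ℝ) * (c + ε k)) := by
    intro k
    set A : ℕ → Set Ω := fun j => {ω | ⌈Real.exp ((j:ℝ) * (c + ε k))⌉₊ ≤ G j ω} with hA
    have hsum : (∑' j, P (A j)) ≠ ∞ := by
      refine tsum_meas_ne_top P (b := fun j => Real.exp (-(j:ℝ) * ε k)) ?_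
        (fun j => (Real.exp_pos _).le) (summable_exp_neg_nat (hε_pos k))
      intro j
      set M : ℕ := ⌈Real.exp ((j:ℝ) * (c + ε k))⌉₊ with hM
      have hM1 : 1 ≤ M := Nat.ceil_pos.mpr (Real.exp_pos _)
      have hbound := geom_tail_bound P (hp_pos j) (hp_le1 j) (G j) (hGdist j) M hM1
      refine hbound.trans (ENNReal.ofReal_le_ofReal ?_)
      -- (1 - p j)^(M-1) ≤ exp(-(j) * ε k)
      have hr0 : 0 ≤ 1 - p j := by linarith [hp_le1 j]
      have h1 : (1 - p j)^(M-1) ≤ Real.exp (-(p j) * (M-1 : ℕ)) := by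
        calc (1 - p j)^(M-1) ≤ (Real.exp (-(p j)))^(M-1) := by
              apply pow_le_pow_left₀ hr0
              linarith [Real.add_one_le_exp (-(p j))]
          _ = Real.exp (-(p j) * (M-1 : ℕ)) := by
              rw [← Real.exp_nat_mul]; congr 1; ring
      refine h1.trans (Real.exp_le_exp.mpr ?_)
      -- -(p j) * (M-1) ≤ -(j) * ε k, i.e. j * ε k ≤ p j * (M-1)
      have hcast : Real.exp ((j:ℝ) * (c + ε k)) - 1 ≤ ((M - 1 : ℕ) : ℝ) := by
        rw [Nat.cast_sub hM1, Nat.cast_one]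
        linarith [Nat.le_ceil (Real.exp ((j:ℝ) * (c + ε k)))]
      rcases Nat.eq_zero_or_pos j with hj | hj
      · subst hj
        simp only [Nat.cast_zero, neg_zero, zero_mul, neg_mul]
        have := mul_nonneg (hp_pos 0).le (Nat.cast_nonneg (M-1) : (0:ℝ) ≤ (M-1 : ℕ))
        linarith
      · have hpj : p j = Real.exp (-(j:ℝ) * c) := hp_eq j hj
        have hprod : Real.exp (-(j:ℝ) * c) * Real.exp ((j:ℝ) * (c + ε k))
            = Real.exp ((j:ℝ) * ε k) := by
          rw [← Real.exp_add]; congr 1; ring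
        have hd : (0:ℝ) < Real.exp (-(j:ℝ) * c) := Real.exp_pos _
        have hle1 : Real.exp (-(j:ℝ) * c) ≤ 1 := Real.exp_le_one_iff.mpr (by
          have : (0:ℝ) ≤ (j:ℝ) := Nat.cast_nonneg j
          nlinarith)
        have haoe : (j:ℝ) * ε k + 1 ≤ Real.exp ((j:ℝ) * ε k) := Real.add_one_le_exp _
        have hmul := mul_le_mul_of_nonneg_left hcast hd.le
        rw [hpj]
        nlinarith
    filter_upwards [ae_eventually_notMem hsum] with ω hω
    filter_upwards [hω] with j hj
    have : G j ω < ⌈Real.exp ((j:ℝ) * (c + ε k))⌉₊ := not_le.mp hj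
    exact_mod_cast Nat.lt_ceil.mp this
  -- Lower bound events (Borel–Cantelli)
  have hlower : ∀ k : ℕ, ∀ᵐ ω ∂P, ∀ᶠ n : ℕ in atTop,
      Real.exp ((n:ℝ) * (c - ε k)) < (G n ω : ℝ) := by
    intro k
    set B : ℕ → Set Ω := fun n => {ω | G n ω ≤ ⌊Real.exp ((n:ℝ) * (c - ε k))⌋₊} with hB
    have hsum : (∑' n, P (B n)) ≠ ∞ := by
      refine tsum_meas_ne_top P (b := fun n => Real.exp (-(n:ℝ) * ε k)) ?_
        (fun n => (Real.exp_pos _).le) (summable_exp_neg_nat (hε_pos k))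
      intro n
      have hbound := geom_head_bound P (hp_pos n) (hp_le1 n) (G n) (hGpos n) (hGdist n)
        ⌊Real.exp ((n:ℝ) * (c - ε k))⌋₊
      refine hbound.trans (ENNReal.ofReal_le_ofReal ?_)
      have h1 : (⌊Real.exp ((n:ℝ) * (c - ε k))⌋₊ : ℝ) ≤ Real.exp ((n:ℝ) * (c - ε k)) :=
        Nat.floor_le (Real.exp_pos _).le
      have h2 : Real.exp ((n:ℝ) * (c - ε k)) * Real.exp (-(n:ℝ) * c)
          = Real.exp (-(n:ℝ) * ε k) := by
        rw [← Real.exp_add]; congr 1; ring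
      calc (⌊Real.exp ((n:ℝ) * (c - ε k))⌋₊ : ℝ) * p n
          ≤ Real.exp ((n:ℝ) * (c - ε k)) * Real.exp (-(n:ℝ) * c) :=
            mul_le_mul h1 (hp_le n) (hp_pos n).le (Real.exp_pos _).le
        _ = Real.exp (-(n:ℝ) * ε k) := h2
    filter_upwards [ae_eventually_notMem hsum] with ω hω
    filter_upwards [hω] with n hn
    have : ⌊Real.exp ((n:ℝ) * (c - ε k))⌋₊ < G n ω := not_le.mp hn
    exact (Nat.floor_lt (Real.exp_pos _).le).mp this
  -- a.s. positivity
  have hposae : ∀ᵐ ω ∂P, ∀ j, G j ω ≠ 0 := by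
    rw [ae_all_iff]
    intro j
    exact ae_iff.mpr (by simpa using hGpos j)
  have hU : ∀ᵐ ω ∂P, ∀ k, ∀ᶠ j : ℕ in atTop,
      (G j ω : ℝ) < Real.exp ((j:ℝ) * (c + ε k)) := ae_all_iff.mpr hupper
  have hL : ∀ᵐ ω ∂P, ∀ k, ∀ᶠ n : ℕ in atTop,
      Real.exp ((n:ℝ) * (c - ε k)) < (G n ω : ℝ) := ae_all_iff.mpr hlower
  filter_upwards [hU, hL, hposae] with ω hUω hLω hposω
  -- Deterministic part
  set S : ℕ → ℝ := fun n => ∑ j ∈ Finset.Icc 1 n, (G j ω : ℝ) with hSdef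
  have hS_ge : ∀ n : ℕ, (n:ℝ) ≤ S n := by
    intro n
    have h1 : ∀ j ∈ Finset.Icc 1 n, (1:ℝ) ≤ (G j ω : ℝ) := by
      intro j _
      exact_mod_cast Nat.one_le_iff_ne_zero.mpr (hposω j)
    calc (n:ℝ) = ∑ _j ∈ Finset.Icc 1 n, (1:ℝ) := by
          rw [Finset.sum_const, Nat.card_Icc]; simp
      _ ≤ S n := Finset.sum_le_sum h1
  have hS_pos : ∀ n : ℕ, 1 ≤ n → 0 < S n := by
    intro n hn
    have : (1:ℝ) ≤ (n:ℝ) := by exact_mod_cast hn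
    linarith [hS_ge n]
  rw [tendsto_order]
  constructor
  · -- lower: ∀ a < c, eventually a < log (S n) / n
    intro a ha
    obtain ⟨k, hk⟩ := exists_nat_gt (c / (c - a))
    have hca : 0 < c - a := by linarith
    have hεk : ε k < c - a := by
      rw [hεdef]
      rw [div_lt_iff₀ (by positivity)]
      have h2 : c / (c - a) < (k:ℝ) + 2 := by linarith
      calc c = (c / (c - a)) * (c - a) := by field_simp
        _ < ((k:ℝ) + 2) * (c - a) := by
            exact mul_lt_mul_of_pos_right h2 hca
        _ = (c - a) * ((k:ℝ) + 2) := by ring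
    filter_upwards [hLω k, eventually_ge_atTop 1] with n hn hn1
    have hnR : (0:ℝ) < (n:ℝ) := by exact_mod_cast hn1
    have hGn : Real.exp ((n:ℝ) * (c - ε k)) ≤ S n := by
      have hmem : n ∈ Finset.Icc 1 n := Finset.mem_Icc.mpr ⟨hn1, le_refl n⟩
      have := Finset.single_le_sum (f := fun j => (G j ω : ℝ))
        (fun j _ => Nat.cast_nonneg _) hmem
      linarith [hn.le]
    have hlog : (n:ℝ) * (c - ε k) ≤ Real.log (S n) :=
      (Real.le_log_iff_exp_le (hS_pos n hn1)).mpr hGn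
    have : a < c - ε k := by linarith
    rw [lt_div_iff₀ hnR]
    calc a * (n:ℝ) < (c - ε k) * (n:ℝ) := by
          exact mul_lt_mul_of_pos_right this hnR
      _ = (n:ℝ) * (c - ε k) := by ring
      _ ≤ Real.log (S n) := hlog
  · -- upper: ∀ b > c, eventually log (S n) / n < b
    intro b hb
    obtain ⟨k, hk⟩ := exists_nat_gt (2 * c / (b - c))
    have hbc : 0 < b - c := by linarith
    have hεk : ε k < (b - c) / 2 := by
      rw [hεdef, div_lt_div_iff₀ (by positivity) (by norm_num : (0:ℝ) < 2)]
      have h2 : 2 * c / (b - c) < (k:ℝ) + 2 := by linarith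
      calc c * 2 = (2 * c / (b - c)) * (b - c) := by field_simp
        _ < ((k:ℝ) + 2) * (b - c) := mul_lt_mul_of_pos_right h2 hbc
        _ = (b - c) * ((k:ℝ) + 2) := by ring
    obtain ⟨N, hN⟩ := eventually_atTop.mp (hUω k)
    set C : ℝ := ∑ j ∈ Finset.Icc 1 N, (G j ω : ℝ) with hCdef
    have hC0 : 0 ≤ C := Finset.sum_nonneg fun j _ => Nat.cast_nonneg _
    have hkey : ∀ n : ℕ, 1 ≤ n →
        S n ≤ (n:ℝ) * ((C + 1) * Real.exp ((n:ℝ) * (c + ε k))) := by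
      intro n hn1
      have hexp1 : 1 ≤ Real.exp ((n:ℝ) * (c + ε k)) := by
        rw [Real.one_le_exp_iff]
        have : (0:ℝ) ≤ (n:ℝ) := Nat.cast_nonneg n
        have hcε : 0 < c + ε k := by linarith [hε_pos k]
        positivity
      have hterm : ∀ j ∈ Finset.Icc 1 n,
          (G j ω : ℝ) ≤ C + Real.exp ((n:ℝ) * (c + ε k)) := by
        intro j hj
        rw [Finset.mem_Icc] at hj
        by_cases hjN : j ≤ N
        · have hmem : j ∈ Finset.Icc 1 N := Finset.mem_Icc.mpr ⟨hj.1, hjN⟩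
          have h1 : (G j ω : ℝ) ≤ C := Finset.single_le_sum (f := fun i => (G i ω : ℝ))
            (fun i _ => Nat.cast_nonneg _) hmem
          linarith [Real.exp_pos ((n:ℝ) * (c + ε k))]
        · have hjN' : N ≤ j := le_of_not_ge hjN
          have h1 : (G j ω : ℝ) < Real.exp ((j:ℝ) * (c + ε k)) := hN j hjN'
          have h2 : Real.exp ((j:ℝ) * (c + ε k)) ≤ Real.exp ((n:ℝ) * (c + ε k)) := by
            apply Real.exp_le_exp.mpr
            have hjn : (j:ℝ) ≤ (n:ℝ) := by exact_mod_cast hj.2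
            have hcε : 0 < c + ε k := by linarith [hε_pos k]
            nlinarith
          linarith
      calc S n ≤ ∑ _j ∈ Finset.Icc 1 n, (C + Real.exp ((n:ℝ) * (c + ε k))) :=
            Finset.sum_le_sum hterm
        _ = (n:ℝ) * (C + Real.exp ((n:ℝ) * (c + ε k))) := by
            rw [Finset.sum_const, Nat.card_Icc]; simp [nsmul_eq_mul]; ring
        _ ≤ (n:ℝ) * ((C + 1) * Real.exp ((n:ℝ) * (c + ε k))) := by
            have hnR : (0:ℝ) ≤ (n:ℝ) := Nat.cast_nonneg n
            have : C + Real.exp ((n:ℝ) * (c + ε k))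
                ≤ (C + 1) * Real.exp ((n:ℝ) * (c + ε k)) := by nlinarith
            nlinarith
    -- (log n + log (C+1)) / n → 0
    have hg : Tendsto (fun n : ℕ => (Real.log n + Real.log (C+1)) / (n:ℝ))
        atTop (𝓝 0) := by
      have h1 : Tendsto (fun n : ℕ => Real.log n / (n:ℝ)) atTop (𝓝 0) :=
        (Real.isLittleO_log_id_atTop.tendsto_div_nhds_zero).comp
          tendsto_natCast_atTop_atTop
      have h2 : Tendsto (fun n : ℕ => Real.log (C+1) / (n:ℝ)) atTop (𝓝 0) :=
        tendsto_const_div_atTop_nhds_zero_nat _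
      have := h1.add h2
      rw [add_zero] at this
      refine this.congr fun n => ?_
      rw [← add_div]
    have hgev : ∀ᶠ n : ℕ in atTop,
        (Real.log n + Real.log (C+1)) / (n:ℝ) < (b - c) / 2 :=
      hg.eventually_lt_const (by linarith)
    filter_upwards [hgev, eventually_ge_atTop 1] with n hng hn1
    have hnR : (0:ℝ) < (n:ℝ) := by exact_mod_cast hn1
    have hlog : Real.log (S n)
        ≤ Real.log n + Real.log (C+1) + (n:ℝ) * (c + ε k) := by
      have h1 : Real.log (S n)
          ≤ Real.log ((n:ℝ) * ((C + 1) * Real.exp ((n:ℝ) * (c + ε k)))) :=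
        Real.log_le_log (hS_pos n hn1) (hkey n hn1)
      rw [Real.log_mul hnR.ne' (by positivity), Real.log_mul (by positivity)
        (Real.exp_pos _).ne', Real.log_exp] at h1
      linarith
    rw [div_lt_iff₀ hnR]
    have hstep : Real.log n + Real.log (C+1) < (b - c) / 2 * (n:ℝ) := by
      rw [div_lt_iff₀ hnR] at hng
      linarith
    have hεn : (n:ℝ) * ε k ≤ (b - c) / 2 * (n:ℝ) := by nlinarith [hε_pos k]
    nlinarith
end
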